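/- Let L be a loss, data (x_t, y_t)_{t=1}^n in ℝ^d × ℝ, and λ > 0. The infimum over matrices U ∈ ℝ^{d×H}, V ∈ ℝ^{k=1 output, i.e. v ∈ ℝ^H} of Σ_t L(y_t, Σ_h v_h·⟨u_h, x_t⟩) + (λ/2)·Σ_h(‖u_h‖² + v_h²), taken over all H, equals the infimum over w ∈ ℝ^d of Σ_t L(y_t, ⟨w, x_t⟩) + λ·‖w‖, where ‖w‖ is the Euclidean norm. -/

import Mathlib

/-- With linear activations and a single output, ℓ2 weight decay over networks of all
sizes is equivalent to Euclidean-norm regularization of the effective linear predictor. -/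
theorem linear_net_weight_decay_eq_norm_reg {d n : ℕ} (L : ℝ → ℝ → ℝ)
    (x : Fin n → EuclideanSpace ℝ (Fin d)) (y : Fin n → ℝ)
    (lam : ℝ) (hlam : 0 < lam) :
    sInf {r : ℝ | ∃ (H : ℕ) (v : Fin H → ℝ) (u : Fin H → EuclideanSpace ℝ (Fin d)),
        r = (∑ t, L (y t) (∑ h, v h * (inner ℝ (u h) (x t) : ℝ)))
          + (lam / 2) * ∑ h, (‖u h‖ ^ 2 + (v h) ^ 2)} =
    sInf {r : ℝ | ∃ w : EuclideanSpace ℝ (Fin d),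
        r = (∑ t, L (y t) ((inner ℝ w (x t) : ℝ))) + lam * ‖w‖} := by
  apply csInf_eq_csInf_of_forall_exists_le
  · rintro r ⟨H, v, u, rfl⟩
    set w : EuclideanSpace ℝ (Fin d) := ∑ h, v h • u h with hw
    refine ⟨(∑ t, L (y t) ((inner ℝ w (x t) : ℝ))) + lam * ‖w‖, ⟨w, rfl⟩, ?_⟩
    have hin : ∀ t, (inner ℝ w (x t) : ℝ) = ∑ h, v h * (inner ℝ (u h) (x t) : ℝ) := by
      intro t
      rw [hw, sum_inner]
      exact Finset.sum_congr rfl fun h _ => real_inner_smul_left _ _ _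
    have hnorm : ‖w‖ ≤ (1 / 2) * ∑ h, (‖u h‖ ^ 2 + (v h) ^ 2) := by
      calc ‖w‖ ≤ ∑ h, ‖v h • u h‖ := norm_sum_le _ _
        _ ≤ ∑ h, (1 / 2) * (‖u h‖ ^ 2 + (v h) ^ 2) := by
            apply Finset.sum_le_sum
            intro h _
            rw [norm_smul]
            have := sq_nonneg (‖u h‖ - |v h|)
            have h1 : |v h| ^ 2 = (v h) ^ 2 := sq_abs _
            have h2 : ‖v h‖ = |v h| := rfl
            nlinarith [norm_nonneg (u h), abs_nonneg (v h)]
        _ = (1 / 2) * ∑ h, (‖u h‖ ^ 2 + (v h) ^ 2) := by rw [Finset.mul_sum]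
    have hL : (∑ t, L (y t) ((inner ℝ w (x t) : ℝ)))
        = ∑ t, L (y t) (∑ h, v h * (inner ℝ (u h) (x t) : ℝ)) := by
      exact Finset.sum_congr rfl fun t _ => by rw [hin t]
    rw [hL]
    have : lam * ‖w‖ ≤ (lam / 2) * ∑ h, (‖u h‖ ^ 2 + (v h) ^ 2) := by
      have := mul_le_mul_of_nonneg_left hnorm hlam.le
      calc lam * ‖w‖ ≤ lam * ((1 / 2) * ∑ h, (‖u h‖ ^ 2 + (v h) ^ 2)) := this
        _ = (lam / 2) * ∑ h, (‖u h‖ ^ 2 + (v h) ^ 2) := by ring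
    linarith
  · rintro r ⟨w, rfl⟩
    set s := Real.sqrt ‖w‖ with hs
    refine ⟨_, ⟨1, (fun _ => s), (fun _ => s⁻¹ • w), rfl⟩, ?_⟩
    have hs0 : 0 ≤ s := Real.sqrt_nonneg _
    have hs2 : s ^ 2 = ‖w‖ := Real.sq_sqrt (norm_nonneg w)
    have hin : ∀ t, s * (inner ℝ (s⁻¹ • w) (x t) : ℝ) = (inner ℝ w (x t) : ℝ) := by
      intro t
      rw [real_inner_smul_left]
      rcases eq_or_ne w 0 with h | h
      · simp [h]
      · have : s ≠ 0 := by
          rw [hs]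
          exact Real.sqrt_ne_zero'.2 (norm_pos_iff.2 h)
        field_simp
    have hpen : ‖s⁻¹ • w‖ ^ 2 + s ^ 2 = 2 * ‖w‖ := by
      rcases eq_or_ne w 0 with h | h
      · simp [h, hs]
      · have hsne : s ≠ 0 := by
          rw [hs]
          exact Real.sqrt_ne_zero'.2 (norm_pos_iff.2 h)
        rw [norm_smul, mul_pow, hs2]
        have : ‖s⁻¹‖ ^ 2 = (s ^ 2)⁻¹ := by
          rw [Real.norm_eq_abs, sq_abs, inv_pow]
        rw [this, hs2]
        have hwne : ‖w‖ ≠ 0 := norm_ne_zero_iff.2 h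
        field_simp
        ring
    have hLsum : (∑ t, L (y t) (∑ h : Fin 1, s * (inner ℝ (s⁻¹ • w) (x t) : ℝ)))
        = ∑ t, L (y t) ((inner ℝ w (x t) : ℝ)) := by
      refine Finset.sum_congr rfl fun t _ => ?_
      rw [Fin.sum_univ_one, hin t]
    rw [hLsum, Fin.sum_univ_one, hpen]
    have : lam / 2 * (2 * ‖w‖) = lam * ‖w‖ := by ring
    rw [this]
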